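/- Application of realizers: for all unitary types A, B and closed term distributions s⃗, t⃗, if s⃗ ⊩ A⇒B and t⃗ ⊩ A, then s⃗ t⃗ ⊩ B (where application of distributions is extended bilinearly). -/

import Mathlib

namespace LinAlg

/-! ### Syntax: pure values, pure terms, term distributions -/

mutual
inductive Val : Type where
  | var : ℕ → Val
  | lam : ℕ → Distr → Val
  | star : Val
  | pair : Val → Val → Val
  | inl : Val → Val
  | inr : Val → Val
inductive Term : Type where
  | val : Val → Term
  | app : Term → Term → Term
  | seq : Term → Distr → Term
  | letp : ℕ → ℕ → Term → Distr → Term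
  | matc : Term → ℕ → Distr → ℕ → Distr → Term
inductive Distr : Type where
  | zero : Distr
  | single : Term → Distr
  | add : Distr → Distr → Distr
  | smul : ℂ → Distr → Distr
end

noncomputable instance : DecidableEq Val := fun _ _ => Classical.dec _
noncomputable instance : DecidableEq Term := fun _ _ => Classical.dec _
noncomputable instance : DecidableEq Distr := fun _ _ => Classical.dec _

/-! ### The shallow congruence ≡ on term distributions -/

inductive Cong : Distr → Distr → Prop where
  | addZero (d : Distr) : Cong (d.add .zero) d
  | oneSmul (d : Distr) : Cong (Distr.smul 1 d) d
  | smulSmul (a b : ℂ) (d : Distr) : Cong (Distr.smul a (Distr.smul b d)) (Distr.smul (a * b) d)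
  | addComm (d₁ d₂ : Distr) : Cong (d₁.add d₂) (d₂.add d₁)
  | addAssoc (d₁ d₂ d₃ : Distr) : Cong ((d₁.add d₂).add d₃) (d₁.add (d₂.add d₃))
  | smulDistrib (a b : ℂ) (d : Distr) : Cong (Distr.smul (a + b) d) ((Distr.smul a d).add (Distr.smul b d))
  | smulAdd (a : ℂ) (d₁ d₂ : Distr) : Cong (Distr.smul a (d₁.add d₂)) ((Distr.smul a d₁).add (Distr.smul a d₂))
  | refl (d : Distr) : Cong d d
  | symm {d₁ d₂ : Distr} : Cong d₁ d₂ → Cong d₂ d₁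
  | trans {d₁ d₂ d₃ : Distr} : Cong d₁ d₂ → Cong d₂ d₃ → Cong d₁ d₃
  | addCongr {d₁ d₁' d₂ d₂' : Distr} : Cong d₁ d₁' → Cong d₂ d₂' → Cong (d₁.add d₂) (d₁'.add d₂')
  | smulCongr (a : ℂ) {d d' : Distr} : Cong d d' → Cong (Distr.smul a d) (Distr.smul a d')

/-! ### Free variables -/

mutual
def fvV : Val → Finset ℕ
  | .var y => {y}
  | .lam y b => fvD b \ {y}
  | .star => ∅
  | .pair v₁ v₂ => fvV v₁ ∪ fvV v₂
  | .inl v => fvV v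
  | .inr v => fvV v
def fvT : Term → Finset ℕ
  | .val v => fvV v
  | .app s t => fvT s ∪ fvT t
  | .seq t s => fvT t ∪ fvD s
  | .letp y z t s => fvT t ∪ (fvD s \ {y, z})
  | .matc t y s₁ z s₂ => fvT t ∪ (fvD s₁ \ {y}) ∪ (fvD s₂ \ {z})
def fvD : Distr → Finset ℕ
  | .zero => ∅
  | .single t => fvT t
  | .add d₁ d₂ => fvD d₁ ∪ fvD d₂
  | .smul _ d => fvD d
end

/-! ### Pure substitution -/

mutual
def substV (x : ℕ) (w : Val) : Val → Val
  | .var y => if y = x then w else .var y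
  | .lam y b => if y = x then .lam y b else .lam y (substD x w b)
  | .star => .star
  | .pair v₁ v₂ => .pair (substV x w v₁) (substV x w v₂)
  | .inl v => .inl (substV x w v)
  | .inr v => .inr (substV x w v)
def substT (x : ℕ) (w : Val) : Term → Term
  | .val v => .val (substV x w v)
  | .app s t => .app (substT x w s) (substT x w t)
  | .seq t s => .seq (substT x w t) (substD x w s)
  | .letp y z t s =>
      .letp y z (substT x w t) (if y = x ∨ z = x then s else substD x w s)
  | .matc t y s₁ z s₂ =>
      .matc (substT x w t) y (if y = x then s₁ else substD x w s₁)
        z (if z = x then s₂ else substD x w s₂)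
def substD (x : ℕ) (w : Val) : Distr → Distr
  | .zero => .zero
  | .single t => .single (substT x w t)
  | .add d₁ d₂ => .add (substD x w d₁) (substD x w d₂)
  | .smul a d => .smul a (substD x w d)
end

/-! ### Linear extensions of the syntactic constructs -/

def appTD (s : Term) : Distr → Distr
  | .zero => .zero
  | .single t => .single (.app s t)
  | .add d₁ d₂ => .add (appTD s d₁) (appTD s d₂)
  | .smul a d => .smul a (appTD s d)

def appDV : Distr → Val → Distr
  | .zero, _ => .zero
  | .single t, v => .single (.app t (.val v))
  | .add d₁ d₂, v => .add (appDV d₁ v) (appDV d₂ v)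
  | .smul a d, v => .smul a (appDV d v)

def seqD : Distr → Distr → Distr
  | .zero, _ => .zero
  | .single t, s => .single (.seq t s)
  | .add d₁ d₂, s => .add (seqD d₁ s) (seqD d₂ s)
  | .smul a d, s => .smul a (seqD d s)

def letpD (x y : ℕ) : Distr → Distr → Distr
  | .zero, _ => .zero
  | .single t, s => .single (.letp x y t s)
  | .add d₁ d₂, s => .add (letpD x y d₁ s) (letpD x y d₂ s)
  | .smul a d, s => .smul a (letpD x y d s)

def matcD : Distr → ℕ → Distr → ℕ → Distr → Distr
  | .zero, _, _, _, _ => .zero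
  | .single t, y, s₁, z, s₂ => .single (.matc t y s₁ z s₂)
  | .add d₁ d₂, y, s₁, z, s₂ => .add (matcD d₁ y s₁ z s₂) (matcD d₂ y s₁ z s₂)
  | .smul a d, y, s₁, z, s₂ => .smul a (matcD d y s₁ z s₂)

/-- Bilinear application of distributions:  (Σᵢ αᵢ·tᵢ)(Σⱼ βⱼ·sⱼ) = Σᵢⱼ αᵢβⱼ·(tᵢ sⱼ). -/
def appD : Distr → Distr → Distr
  | .zero, _ => .zero
  | .single t, w => appTD t w
  | .add d₁ d₂, w => .add (appD d₁ w) (appD d₂ w)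
  | .smul a d, w => .smul a (appD d w)

/-- Bilinear substitution  d⟨x := w⃗⟩ = Σⱼ βⱼ · d[x := wⱼ]  (recursion on the value
distribution w⃗; non-value summands are junk and are sent to 0⃗). -/
def bsubst (x : ℕ) (d : Distr) : Distr → Distr
  | .zero => .zero
  | .single (.val w) => substD x w d
  | .single _ => .zero
  | .add w₁ w₂ => .add (bsubst x d w₁) (bsubst x d w₂)
  | .smul a w => .smul a (bsubst x d w)

/-! ### Evaluation -/

inductive Atom : Term → Distr → Prop where
  | beta (x : ℕ) (b : Distr) (v : Val) :
      Atom (.app (.val (.lam x b)) (.val v)) (substD x v b)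
  | seqStar (s : Distr) : Atom (.seq (.val .star) s) s
  | letPair (x y : ℕ) (v w : Val) (s : Distr) :
      Atom (.letp x y (.val (.pair v w)) s) (substD y w (substD x v s))
  | matchInl (v : Val) (y : ℕ) (s₁ : Distr) (z : ℕ) (s₂ : Distr) :
      Atom (.matc (.val (.inl v)) y s₁ z s₂) (substD y v s₁)
  | matchInr (v : Val) (y : ℕ) (s₁ : Distr) (z : ℕ) (s₂ : Distr) :
      Atom (.matc (.val (.inr v)) y s₁ z s₂) (substD z v s₂)
  | appR (s : Term) {t : Term} {d : Distr} : Atom t d → Atom (.app s t) (appTD s d)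
  | appL (v : Val) {t : Term} {d : Distr} : Atom t d → Atom (.app t (.val v)) (appDV d v)
  | seqC (s : Distr) {t : Term} {d : Distr} : Atom t d → Atom (.seq t s) (seqD d s)
  | letC (x y : ℕ) (s : Distr) {t : Term} {d : Distr} :
      Atom t d → Atom (.letp x y t s) (letpD x y d s)
  | matcC (y : ℕ) (s₁ : Distr) (z : ℕ) (s₂ : Distr) {t : Term} {d : Distr} :
      Atom t d → Atom (.matc t y s₁ z s₂) (matcD d y s₁ z s₂)

/-- One-step evaluation:  t⃗ ≻ t⃗′. -/
def Step (d d' : Distr) : Prop :=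
  ∃ (a : ℂ) (s : Term) (s' r : Distr),
    Cong d (Distr.add (.smul a (.single s)) r) ∧
    Cong d' (Distr.add (.smul a s') r) ∧ Atom s s'

/-- Evaluation  t⃗ ≻≻ t⃗′:  reflexive-transitive closure of one-step evaluation. -/
def Eval : Distr → Distr → Prop := Relation.ReflTransGen Step

/-! ### Value distributions, inner product, norm -/

def IsValT : Term → Prop
  | .val _ => True
  | _ => False

def IsValD : Distr → Prop
  | .zero => True
  | .single t => IsValT t
  | .add d₁ d₂ => IsValD d₁ ∧ IsValD d₂
  | .smul _ d => IsValD d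

/-- The set of closed value distributions. -/
def ClosedValD : Set Distr := {d | IsValD d ∧ fvD d = ∅}

/-- Total coefficient of the pure term `t` in the distribution `d`. -/
noncomputable def coeff : Distr → Term → ℂ
  | .zero, _ => 0
  | .single s, t => if s = t then 1 else 0
  | .add d₁ d₂, t => coeff d₁ t + coeff d₂ t
  | .smul a d, t => a * coeff d t

/-- The domain of a distribution (all pure terms occurring in it, even with
coefficient 0). -/
noncomputable def domD : Distr → Finset Term
  | .zero => ∅
  | .single t => {t}
  | .add d₁ d₂ => domD d₁ ∪ domD d₂
  | .smul _ d => domD d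

/-- The inner product ⟨v⃗|w⃗⟩ on value distributions. -/
noncomputable def innerD (v w : Distr) : ℂ :=
  ∑ t ∈ domD v, (starRingEnd ℂ) (coeff v t) * coeff w t

/-- The pseudo-ℓ²-norm ‖v⃗‖. -/
noncomputable def normD (v : Distr) : ℝ := Real.sqrt (innerD v v).re

/-- The unit sphere S of closed value distributions of norm 1. -/
def Sphere : Set Distr := {d | d ∈ ClosedValD ∧ normD d = 1}

/-- Span(X): weak linear combinations of elements of X (taken modulo ≡). -/
inductive Span (X : Set Distr) : Distr → Prop where
  | mem {d : Distr} : d ∈ X → Span X d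
  | zero : Span X .zero
  | add {d₁ d₂ : Distr} : Span X d₁ → Span X d₂ → Span X (d₁.add d₂)
  | smul (a : ℂ) {d : Distr} : Span X d → Span X (Distr.smul a d)
  | congr {d d' : Distr} : Span X d → Cong d d' → Span X d'

/-! ### Realizability: unitary types -/

/-- t⃗ ⊩ A :  t⃗ evaluates to some vector of ⟦A⟧. -/
def Realizes (A : Set Distr) (t : Distr) : Prop := ∃ v ∈ A, Eval t v

/-- |A| : the set of (closed) realizers of A. -/
def realizersOf (A : Set Distr) : Set Distr := {t | fvD t = ∅ ∧ Realizes A t}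

/-! ### Type constructors -/

def UnitT : Set Distr := {Distr.single (.val .star)}

/-- ♭A : the basis of A. -/
def flatT (X : Set Distr) : Set Distr :=
  {e | ∃ d ∈ X, ∃ v : Val, (Term.val v) ∈ domD d ∧ e = Distr.single (.val v)}

/-- ♯A : the unitary span of A. -/
def sharpT (X : Set Distr) : Set Distr := {d | Span X d ∧ d ∈ Sphere}

/-- Linear extension of a value constructor. -/
def mapVD (f : Val → Val) : Distr → Distr
  | .zero => .zero
  | .single (.val v) => .single (.val (f v))
  | .single t => .single t
  | .add d₁ d₂ => .add (mapVD f d₁) (mapVD f d₂)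
  | .smul a d => .smul a (mapVD f d)

def inlD : Distr → Distr := mapVD Val.inl
def inrD : Distr → Distr := mapVD Val.inr

/-- Bilinear extension of pairing. -/
def pairD : Distr → Distr → Distr
  | .zero, _ => .zero
  | .single (.val v), w => mapVD (Val.pair v) w
  | .single t, _ => .single t
  | .add d₁ d₂, w => .add (pairD d₁ w) (pairD d₂ w)
  | .smul a d, w => .smul a (pairD d w)

/-- A + B (simple sum). -/
def plusT (A B : Set Distr) : Set Distr :=
  {d | (∃ v ∈ A, d = inlD v) ∨ (∃ w ∈ B, d = inrD w)}

/-- A × B (simple product). -/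
def timesT (A B : Set Distr) : Set Distr :=
  {d | ∃ v ∈ A, ∃ w ∈ B, d = pairD v w}

/-- A → B (pure arrow). -/
def arrowT (A B : Set Distr) : Set Distr :=
  {d | ∃ (x : ℕ) (b : Distr), d = Distr.single (.val (.lam x b)) ∧ fvD d = ∅ ∧
      ∀ v ∈ A, Realizes B (bsubst x b v)}

/-- Σᵢ αᵢ · λx.t⃗ᵢ  ↦  Σᵢ αᵢ · t⃗ᵢ  (strips the λx in front of each summand). -/
def stripLam (x : ℕ) : Distr → Distr
  | .zero => .zero
  | .single (.val (.lam y b)) => if y = x then b else .single (.val (.lam y b))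
  | .single t => .single t
  | .add d₁ d₂ => .add (stripLam x d₁) (stripLam x d₂)
  | .smul a d => .smul a (stripLam x d)

/-- A ⇒ B (unitary arrow). -/
def uarrowT (A B : Set Distr) : Set Distr :=
  {d | d ∈ Sphere ∧ ∃ x : ℕ,
      (∀ t ∈ domD d, ∃ b : Distr, t = Term.val (.lam x b)) ∧
      ∀ v ∈ A, Realizes B (bsubst x (stripLam x d) v)}

/-! ### Booleans -/

def ttD : Distr := .single (.val (.inl .star))
def ffD : Distr := .single (.val (.inr .star))

/-- 𝔹 = 𝕌 + 𝕌. -/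
def BoolT : Set Distr := plusT UnitT UnitT

/-- ♯𝔹, the type of unitary Booleans. -/
def sharpBool : Set Distr := sharpT BoolT

/-- Boolean projection π : Span({tt,ff}) → ℂ². -/
noncomputable def piB (d : Distr) : ℂ × ℂ :=
  (coeff d (.val (.inl .star)), coeff d (.val (.inr .star)))

/-- t⃗ represents the operator F : ℂ² → ℂ². -/
def Represents (td : Distr) (F : ℂ × ℂ → ℂ × ℂ) : Prop :=
  ∀ v, Span BoolT v → ∃ w, Span BoolT w ∧ Eval (appD td v) w ∧ piB w = F (piB v)

/-- Hermitian inner product on ℂ². -/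
def hinner (u v : ℂ × ℂ) : ℂ :=
  (starRingEnd ℂ) u.1 * v.1 + (starRingEnd ℂ) u.2 * v.2

/-- A unitary operator on ℂ². -/
def IsUnitaryOp (F : ℂ × ℂ → ℂ × ℂ) : Prop :=
  ∀ u v : ℂ × ℂ, hinner (F u) (F v) = hinner u v

/-! ### Typing contexts, substitutions, judgments -/

abbrev Ctx := List (ℕ × Set Distr)
abbrev Subst := List (ℕ × Distr)

/-- Applying a substitution, one bilinear substitution at a time. -/
def applySub : Distr → Subst → Distr
  | d, [] => d
  | d, (x, w) :: σ => applySub (bsubst x d w) σ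

/-- σ ∈ ⟦Γ⟧. -/
def SubMem (σ : Subst) (Γ : Ctx) : Prop :=
  List.Forall₂ (fun p q => p.1 = q.1 ∧ p.2 ∈ q.2) σ Γ

def ctxDom (Γ : Ctx) : Set ℕ := {x | ∃ A, (x, A) ∈ Γ}

/-- dom♯(Γ): the variables of Γ whose type is not a pure-value type. -/
def ctxDomSharp (Γ : Ctx) : Set ℕ := {x | ∃ A, (x, A) ∈ Γ ∧ flatT A ≠ A}

/-- All the types of the context are unitary types (subsets of the sphere). -/
def CtxUnitary (Γ : Ctx) : Prop := ∀ p ∈ Γ, p.2 ⊆ Sphere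

/-- Validity of the typing judgment  Γ ⊢ t⃗ : A. -/
def ValidJ (Γ : Ctx) (t : Distr) (A : Set Distr) : Prop :=
  ctxDomSharp Γ ⊆ (fvD t : Set ℕ) ∧ (fvD t : Set ℕ) ⊆ ctxDom Γ ∧
  ∀ σ : Subst, SubMem σ Γ → Realizes A (applySub t σ)

/-- Validity of the orthogonality judgment  Γ | Δ₁ ⊢ t⃗₁ ⊥ Δ₂ ⊢ t⃗₂ : A. -/
def OrthoJ (Γ Δ₁ Δ₂ : Ctx) (t₁ t₂ : Distr) (A : Set Distr) : Prop :=
  ValidJ (Γ ++ Δ₁) t₁ A ∧ ValidJ (Γ ++ Δ₂) t₂ A ∧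
  ∀ σ σ₁ σ₂ : Subst, SubMem σ Γ → SubMem σ₁ Δ₁ → SubMem σ₂ Δ₂ →
    ∀ v₁ v₂ : Distr, v₁ ∈ ClosedValD → v₂ ∈ ClosedValD →
      Eval (applySub t₁ (σ ++ σ₁)) v₁ → Eval (applySub t₂ (σ ++ σ₂)) v₂ →
      innerD v₁ v₂ = 0

end LinAlg

namespace LinAlg

/-! ### Auxiliary development -/

abbrev TS := Relation.TransGen Step

/-- Structural induction principle on the `Distr` spine. -/
theorem Cong.map (F : Distr → Distr) (h0 : F .zero = .zero)
    (hadd : ∀ d e, F (d.add e) = (F d).add (F e))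
    (hsmul : ∀ a d, F (.smul a d) = .smul a (F d)) :
    ∀ {d e : Distr}, Cong d e → Cong (F d) (F e) := by
  intro d e h
  induction h with
  | addZero d => rw [hadd, h0]; exact .addZero _
  | oneSmul d => rw [hsmul]; exact .oneSmul _
  | smulSmul a b d => rw [hsmul, hsmul, hsmul]; exact .smulSmul a b _
  | addComm d₁ d₂ => rw [hadd, hadd]; exact .addComm _ _
  | addAssoc d₁ d₂ d₃ => rw [hadd, hadd, hadd, hadd]; exact .addAssoc _ _ _
  | smulDistrib a b d => rw [hsmul, hadd, hsmul, hsmul]; exact .smulDistrib a b _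
  | smulAdd a d₁ d₂ => rw [hsmul, hadd, hadd, hsmul, hsmul]; exact .smulAdd a _ _
  | refl d => exact .refl _
  | symm _ ih => exact ih.symm
  | trans _ _ ih1 ih2 => exact ih1.trans ih2
  | addCongr _ _ ih1 ih2 => rw [hadd, hadd]; exact ih1.addCongr ih2
  | smulCongr a _ ih => rw [hsmul, hsmul]; exact .smulCongr a ih

theorem cong_zero_smul_zero : Cong (Distr.smul 0 .zero) .zero := by
  have h1 : Cong (Distr.smul ((1:ℂ)+0) .zero) ((Distr.smul 1 .zero).add (.smul 0 .zero)) :=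
    .smulDistrib 1 0 _
  rw [add_zero] at h1
  have h2 : Cong (Distr.smul 1 .zero) .zero := .oneSmul _
  exact (h2.symm.trans (h1.trans ((h2.addCongr (.refl _)).trans
    ((Cong.addComm _ _).trans (.addZero _))))).symm

theorem cong_smul_zero (a : ℂ) : Cong (Distr.smul a .zero) .zero := by
  have h := (Cong.smulCongr a cong_zero_smul_zero.symm).trans (Cong.smulSmul a 0 .zero)
  rw [mul_zero] at h
  exact h.trans cong_zero_smul_zero

theorem cong_swap4 (a b c d : Distr) :
    Cong ((a.add b).add (c.add d)) ((a.add c).add (b.add d)) :=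
  (Cong.addAssoc a b (c.add d)).trans <|
    (Cong.addCongr (.refl a)
      (((Cong.addAssoc b c d).symm.trans
        ((Cong.addCongr (Cong.addComm b c) (.refl d)).trans (Cong.addAssoc c b d))))).trans
    (Cong.addAssoc a c (b.add d)).symm

/-! ### Step combinators -/

theorem mk_step {α : ℂ} {u : Term} {u' r d d' : Distr}
    (h1 : Cong d ((Distr.smul α (.single u)).add r))
    (h2 : Cong d' ((Distr.smul α u').add r)) (ha : Atom u u') : Step d d' :=
  ⟨α, u, u', r, h1, h2, ha⟩

theorem step_absorb {c d d' e : Distr} (hc : Cong c d) (h : Step d d') (hc' : Cong d' e) :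
    Step c e := by
  obtain ⟨α, u, u', r, h1, h2, ha⟩ := h
  exact ⟨α, u, u', r, hc.trans h1, hc'.symm.trans h2, ha⟩

theorem step_single {u : Term} {d : Distr} (ha : Atom u d) : Step (.single u) d :=
  mk_step (α := 1) (r := .zero)
    ((Cong.addZero _).trans (.oneSmul _)).symm
    ((Cong.addZero _).trans (.oneSmul _)).symm ha

theorem step_add_left {d d' : Distr} (e : Distr) (h : Step d d') : Step (d.add e) (d'.add e) := by
  obtain ⟨α, u, u', r, h1, h2, ha⟩ := h
  exact ⟨α, u, u', r.add e, (h1.addCongr (.refl e)).trans (.addAssoc _ _ _),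
    (h2.addCongr (.refl e)).trans (.addAssoc _ _ _), ha⟩

theorem step_add_right {d d' : Distr} (e : Distr) (h : Step d d') : Step (e.add d) (e.add d') :=
  step_absorb (Cong.addComm e d) (step_add_left e h) (Cong.addComm d' e)

theorem step_smul {d d' : Distr} (a : ℂ) (h : Step d d') : Step (.smul a d) (.smul a d') := by
  obtain ⟨α, u, u', r, h1, h2, ha⟩ := h
  exact ⟨a * α, u, u', .smul a r,
    (Cong.smulCongr a h1).trans ((Cong.smulAdd a _ _).trans
      ((Cong.smulSmul a α _).addCongr (.refl _))),
    (Cong.smulCongr a h2).trans ((Cong.smulAdd a _ _).trans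
      ((Cong.smulSmul a α _).addCongr (.refl _))), ha⟩

theorem ts_congr_right {a b b' : Distr} (h : TS a b) (hc : Cong b b') : TS a b' := by
  cases h with
  | single h1 => exact .single (step_absorb (.refl _) h1 hc)
  | tail h1 h2 => exact h1.tail (step_absorb (.refl _) h2 hc)

theorem ts_congr_left {a a' b : Distr} (hc : Cong a' a) (h : TS a b) : TS a' b := by
  induction h with
  | single h1 => exact .single (step_absorb hc h1 (.refl _))
  | tail _ h2 ih => exact ih.tail h2

/-! ### vmap: generic linear extension over a value distribution -/

def vmap (g : Val → Distr) : Distr → Distr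
  | .zero => .zero
  | .single (.val w) => g w
  | .single _ => .zero
  | .add d₁ d₂ => (vmap g d₁).add (vmap g d₂)
  | .smul a d => .smul a (vmap g d)

theorem vmap_ext {g g' : Val → Distr} (h : ∀ w, g w = g' w) :
    ∀ v, vmap g v = vmap g' v
  | .zero => rfl
  | .single t => by cases t <;> simp [vmap, h]
  | .add v₁ v₂ => by simp [vmap, vmap_ext h v₁, vmap_ext h v₂]
  | .smul a v => by simp [vmap, vmap_ext h v]

theorem bsubst_eq_vmap (x : ℕ) (d : Distr) :
    ∀ v, bsubst x d v = vmap (fun w => substD x w d) v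
  | .zero => rfl
  | .single t => by cases t <;> simp [bsubst, vmap]
  | .add v₁ v₂ => by simp [bsubst, vmap, bsubst_eq_vmap x d v₁, bsubst_eq_vmap x d v₂]
  | .smul a v => by simp [bsubst, vmap, bsubst_eq_vmap x d v]

theorem vmap_zero {g : Val → Distr} (h : ∀ w, Cong (g w) .zero) :
    ∀ v, Cong (vmap g v) .zero
  | .zero => .refl _
  | .single t => by
      cases t with
      | val w => exact h w
      | app a b => exact .refl _
      | seq a b => exact .refl _
      | letp a b c d => exact .refl _
      | matc a b c d e => exact .refl _
  | .add v₁ v₂ =>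
      ((vmap_zero h v₁).addCongr (vmap_zero h v₂)).trans (.addZero _)
  | .smul a v =>
      (Cong.smulCongr a (vmap_zero h v)).trans (cong_smul_zero a)

theorem vmap_add (g₁ g₂ : Val → Distr) :
    ∀ v, Cong (vmap (fun w => (g₁ w).add (g₂ w)) v) ((vmap g₁ v).add (vmap g₂ v))
  | .zero => (Cong.addZero _).symm
  | .single t => by
      cases t with
      | val w => exact .refl _
      | app a b => exact (Cong.addZero _).symm
      | seq a b => exact (Cong.addZero _).symm
      | letp a b c d => exact (Cong.addZero _).symm
      | matc a b c d e => exact (Cong.addZero _).symm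
  | .add v₁ v₂ =>
      ((vmap_add g₁ g₂ v₁).addCongr (vmap_add g₁ g₂ v₂)).trans
        (cong_swap4 _ _ _ _)
  | .smul a v =>
      (Cong.smulCongr a (vmap_add g₁ g₂ v)).trans (Cong.smulAdd a _ _)

theorem vmap_smul (a : ℂ) (g : Val → Distr) :
    ∀ v, Cong (vmap (fun w => .smul a (g w)) v) (.smul a (vmap g v))
  | .zero => (cong_smul_zero a).symm
  | .single t => by
      cases t with
      | val w => exact .refl _
      | app s b => exact (cong_smul_zero a).symm
      | seq s b => exact (cong_smul_zero a).symm
      | letp s b c d => exact (cong_smul_zero a).symm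
      | matc s b c d e => exact (cong_smul_zero a).symm
  | .add v₁ v₂ =>
      ((vmap_smul a g v₁).addCongr (vmap_smul a g v₂)).trans (Cong.smulAdd a _ _).symm
  | .smul b v => by
      have h := (Cong.smulCongr b (vmap_smul a g v)).trans (Cong.smulSmul b a (vmap g v))
      rw [mul_comm] at h
      exact h.trans (Cong.smulSmul a b (vmap g v)).symm

theorem appTD_eq_vmap (p : Term) :
    ∀ v, IsValD v → appTD p v = vmap (fun w => Distr.single (.app p (.val w))) v
  | .zero, _ => rfl
  | .single t, hv => by
      cases t with
      | val w => rfl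
      | app a b => exact absurd hv (by simp [IsValD, IsValT])
      | seq a b => exact absurd hv (by simp [IsValD, IsValT])
      | letp a b c d => exact absurd hv (by simp [IsValD, IsValT])
      | matc a b c d e => exact absurd hv (by simp [IsValD, IsValT])
  | .add v₁ v₂, hv => by
      have h1 : IsValD v₁ := hv.1
      have h2 : IsValD v₂ := hv.2
      simp [appTD, vmap, appTD_eq_vmap p v₁ h1, appTD_eq_vmap p v₂ h2]
  | .smul a v, hv => by
      simp [appTD, vmap, appTD_eq_vmap p v hv]

/-! ### Leafwise multistep over a value distribution -/

theorem msv {g g' : Val → Distr} (h : ∀ w, Step (g w) (g' w)) :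
    ∀ v, IsValD v →
      TS (vmap g v) (vmap g' v) ∨ (Cong (vmap g v) (vmap g' v) ∧ domD v = ∅)
  | .zero, _ => Or.inr ⟨.refl _, rfl⟩
  | .single t, hv => by
      cases t with
      | val w => exact Or.inl (.single (h w))
      | app a b => exact absurd hv (by simp [IsValD, IsValT])
      | seq a b => exact absurd hv (by simp [IsValD, IsValT])
      | letp a b c d => exact absurd hv (by simp [IsValD, IsValT])
      | matc a b c d e => exact absurd hv (by simp [IsValD, IsValT])
  | .add v₁ v₂, hv => by
      have hv1 : IsValD v₁ := hv.1
      have hv2 : IsValD v₂ := hv.2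
      rcases msv h v₁ hv1 with t1 | ⟨c1, e1⟩ <;> rcases msv h v₂ hv2 with t2 | ⟨c2, e2⟩
      · exact Or.inl ((Relation.TransGen.lift (fun d => d.add (vmap g v₂))
          (fun _ _ hs => step_add_left _ hs) _ _ t1).trans
          (Relation.TransGen.lift (fun d => (vmap g' v₁).add d)
            (fun _ _ hs => step_add_right _ hs) _ _ t2))
      · exact Or.inl (ts_congr_right (Relation.TransGen.lift (fun d => d.add (vmap g v₂))
          (fun _ _ hs => step_add_left _ hs) _ _ t1) ((Cong.refl _).addCongr c2))
      · exact Or.inl (ts_congr_right (Relation.TransGen.lift (fun d => (vmap g v₁).add d)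
          (fun _ _ hs => step_add_right _ hs) _ _ t2) (c1.addCongr (.refl _)))
      · exact Or.inr ⟨c1.addCongr c2, by simp [domD, e1, e2]⟩
  | .smul a v, hv => by
      rcases msv h v hv with t1 | ⟨c1, e1⟩
      · exact Or.inl (Relation.TransGen.lift (Distr.smul a)
          (fun _ _ hs => step_smul a hs) _ _ t1)
      · exact Or.inr ⟨.smulCongr a c1, by simpa [domD] using e1⟩

/-! ### Bilinearity swap for application -/

theorem swapA : ∀ (d : Distr), ∀ v, IsValD v →
    Cong (vmap (fun w => appDV d w) v) (appD d v)
  | .zero, v, hv => vmap_zero (fun w => by simp [appDV]; exact .refl _) v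
  | .single t, v, hv => by
      have e : vmap (fun w => appDV (Distr.single t) w) v = appD (Distr.single t) v := by
        show _ = appTD t v
        rw [appTD_eq_vmap t v hv]
        exact vmap_ext (fun w => by simp [appDV]) v
      rw [e]; exact .refl _
  | .add d₁ d₂, v, hv => by
      have e : vmap (fun w => appDV (d₁.add d₂) w) v
          = vmap (fun w => (appDV d₁ w).add (appDV d₂ w)) v :=
        vmap_ext (fun w => by simp [appDV]) v
      rw [e]
      exact (vmap_add _ _ v).trans ((swapA d₁ v hv).addCongr (swapA d₂ v hv))
  | .smul a d, v, hv => by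
      have e : vmap (fun w => appDV (Distr.smul a d) w) v
          = vmap (fun w => Distr.smul a (appDV d w)) v :=
        vmap_ext (fun w => by simp [appDV]) v
      rw [e]
      exact (vmap_smul a _ v).trans (.smulCongr a (swapA d v hv))

/-! ### Full beta reduction of an application of distributions -/

theorem ms (x : ℕ) :
    ∀ f, (∀ u ∈ domD f, ∃ b, u = Term.val (.lam x b)) → ∀ v, IsValD v →
      TS (appD f v) (bsubst x (stripLam x f) v) ∨
        (Cong (appD f v) (bsubst x (stripLam x f) v) ∧ (domD f = ∅ ∨ domD v = ∅))
  | .zero, _, v, _ => by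
      refine Or.inr ⟨?_, Or.inl rfl⟩
      show Cong (Distr.zero) _
      rw [show stripLam x .zero = .zero from rfl, bsubst_eq_vmap]
      exact (vmap_zero (fun w => by simp only [substD]; exact .refl _) v).symm
  | .single t, hf, v, hv => by
      obtain ⟨b, rfl⟩ := hf t (by simp [domD])
      have e1 : appD (Distr.single (.val (.lam x b))) v
          = vmap (fun w => Distr.single (.app (.val (.lam x b)) (.val w))) v := by
        show appTD _ v = _
        exact appTD_eq_vmap _ v hv
      have e2 : bsubst x (stripLam x (Distr.single (.val (.lam x b)))) v
          = vmap (fun w => substD x w b) v := by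
        rw [show stripLam x (Distr.single (.val (.lam x b))) = b by simp [stripLam]]
        exact bsubst_eq_vmap x b v
      rw [e1, e2]
      rcases msv (fun w => step_single (Atom.beta x b w)) v hv with h | ⟨h, hd⟩
      · exact Or.inl h
      · exact Or.inr ⟨h, Or.inr hd⟩
  | .add f₁ f₂, hf, v, hv => by
      have hf₁ : ∀ u ∈ domD f₁, ∃ b, u = Term.val (.lam x b) := fun u hu =>
        hf u (by simp [domD, hu])
      have hf₂ : ∀ u ∈ domD f₂, ∃ b, u = Term.val (.lam x b) := fun u hu =>
        hf u (by simp [domD, hu])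
      have cadd : Cong (bsubst x (stripLam x (f₁.add f₂)) v)
          ((bsubst x (stripLam x f₁) v).add (bsubst x (stripLam x f₂) v)) := by
        rw [show stripLam x (f₁.add f₂) = (stripLam x f₁).add (stripLam x f₂) from rfl,
          bsubst_eq_vmap, bsubst_eq_vmap, bsubst_eq_vmap,
          vmap_ext (g' := fun w => (substD x w (stripLam x f₁)).add (substD x w (stripLam x f₂)))
            (fun w => by simp [substD]) v]
        exact vmap_add _ _ v
      have eapp : appD (f₁.add f₂) v = (appD f₁ v).add (appD f₂ v) := rfl
      rw [eapp]
      rcases ms x f₁ hf₁ v hv with t1 | ⟨c1, e1⟩ <;> rcases ms x f₂ hf₂ v hv with t2 | ⟨c2, e2⟩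
      · refine Or.inl (ts_congr_right ?_ cadd.symm)
        exact (Relation.TransGen.lift (fun d => d.add (appD f₂ v))
          (fun _ _ hs => step_add_left _ hs) _ _ t1).trans
          (Relation.TransGen.lift (fun d => (bsubst x (stripLam x f₁) v).add d)
            (fun _ _ hs => step_add_right _ hs) _ _ t2)
      · refine Or.inl (ts_congr_right (Relation.TransGen.lift (fun d => d.add (appD f₂ v))
          (fun _ _ hs => step_add_left _ hs) _ _ t1)
          (((Cong.refl _).addCongr c2).trans cadd.symm))
      · refine Or.inl (ts_congr_right (Relation.TransGen.lift (fun d => (appD f₁ v).add d)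
          (fun _ _ hs => step_add_right _ hs) _ _ t2)
          ((c1.addCongr (.refl _)).trans cadd.symm))
      · refine Or.inr ⟨(c1.addCongr c2).trans cadd.symm, ?_⟩
        rcases e1 with h1 | h1
        · rcases e2 with h2 | h2
          · exact Or.inl (by simp [domD, h1, h2])
          · exact Or.inr h2
        · exact Or.inr h1
  | .smul a f, hf, v, hv => by
      have hf' : ∀ u ∈ domD f, ∃ b, u = Term.val (.lam x b) := fun u hu =>
        hf u (by simpa [domD] using hu)
      have csmul : Cong (bsubst x (stripLam x (Distr.smul a f)) v)
          (Distr.smul a (bsubst x (stripLam x f) v)) := by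
        rw [show stripLam x (Distr.smul a f) = Distr.smul a (stripLam x f) from rfl,
          bsubst_eq_vmap, bsubst_eq_vmap,
          vmap_ext (g' := fun w => Distr.smul a (substD x w (stripLam x f)))
            (fun w => by simp [substD]) v]
        exact vmap_smul a _ v
      have eapp : appD (Distr.smul a f) v = Distr.smul a (appD f v) := rfl
      rw [eapp]
      rcases ms x f hf' v hv with t1 | ⟨c1, e1⟩
      · exact Or.inl (ts_congr_right (Relation.TransGen.lift (Distr.smul a)
          (fun _ _ hs => step_smul a hs) _ _ t1) csmul.symm)
      · exact Or.inr ⟨(Cong.smulCongr a c1).trans csmul.symm, by simpa [domD] using e1⟩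

/-! ### Lifting evaluation through application contexts -/

theorem step_appTD (p : Term) {t t' : Distr} (h : Step t t') :
    Step (appTD p t) (appTD p t') := by
  obtain ⟨α, u, u', r, h1, h2, ha⟩ := h
  refine ⟨α, .app p u, appTD p u', appTD p r, ?_, ?_, Atom.appR p ha⟩
  · have := Cong.map (appTD p) rfl (fun _ _ => rfl) (fun _ _ => rfl) h1
    simpa [appTD] using this
  · have := Cong.map (appTD p) rfl (fun _ _ => rfl) (fun _ _ => rfl) h2
    simpa [appTD] using this

theorem evalArg {t t' : Distr} (h : Eval t t') : ∀ s, Eval (appD s t) (appD s t')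
  | .zero => .refl
  | .single p => Relation.ReflTransGen.lift (appTD p) (fun _ _ hs => step_appTD p hs) _ _ h
  | .add s₁ s₂ => by
      show Eval ((appD s₁ t).add (appD s₂ t)) ((appD s₁ t').add (appD s₂ t'))
      exact (Relation.ReflTransGen.lift (fun d => d.add (appD s₂ t))
        (fun _ _ hs => step_add_left _ hs) _ _ (evalArg h s₁)).trans
        (Relation.ReflTransGen.lift (fun d => (appD s₁ t').add d)
          (fun _ _ hs => step_add_right _ hs) _ _ (evalArg h s₂))
  | .smul a s =>
      Relation.ReflTransGen.lift (Distr.smul a) (fun _ _ hs => step_smul a hs) _ _ (evalArg h s)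

theorem step_app_fun {v : Distr} (hv : IsValD v) (hvd : domD v ≠ ∅) {s s' : Distr}
    (h : Step s s') : TS (appD s v) (appD s' v) := by
  obtain ⟨α, u, u', r, h1, h2, ha⟩ := h
  have hc1 : Cong (appD s v) ((Distr.smul α (appTD u v)).add (appD r v)) := by
    have := Cong.map (fun d => appD d v) rfl (fun _ _ => rfl) (fun _ _ => rfl) h1
    simpa [appD] using this
  have key : TS (vmap (fun w => Distr.single (.app u (.val w))) v)
      (vmap (fun w => appDV u' w) v) := by
    rcases msv (fun w => step_single (Atom.appL w ha)) v hv with t1 | ⟨_, e⟩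
    · exact t1
    · exact absurd e hvd
  have lifted : TS ((Distr.smul α (appTD u v)).add (appD r v))
      ((Distr.smul α (vmap (fun w => appDV u' w) v)).add (appD r v)) := by
    rw [appTD_eq_vmap u v hv]
    exact Relation.TransGen.lift (fun d => (Distr.smul α d).add (appD r v))
      (fun _ _ hs => step_add_left _ (step_smul α hs)) _ _ key
  have hc2 : Cong ((Distr.smul α (vmap (fun w => appDV u' w) v)).add (appD r v))
      (appD s' v) := by
    have hm := Cong.map (fun d => appD d v) rfl (fun _ _ => rfl) (fun _ _ => rfl) h2
    refine ((Cong.smulCongr α (swapA u' v hv)).addCongr (.refl _)).trans ?_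
    exact (by simpa [appD] using hm : Cong (appD s' v) _).symm
  exact ts_congr_right (ts_congr_left hc1 lifted) hc2

theorem evalFun {v : Distr} (hv : IsValD v) (hvd : domD v ≠ ∅) {s f : Distr}
    (h : Eval s f) : Eval (appD s v) (appD f v) := by
  induction h with
  | refl => exact .refl
  | tail _ h2 ih => exact ih.trans (step_app_fun hv hvd h2).to_reflTransGen

theorem dom_ne_of_norm_one {d : Distr} (h : normD d = 1) : domD d ≠ ∅ := by
  intro hd
  rw [normD, innerD, hd, Finset.sum_empty] at h
  simp at h

/-- Application of realizers: if s⃗ ⊩ A⇒B and t⃗ ⊩ A then s⃗ t⃗ ⊩ B. -/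
theorem application_of_realizers (A B : Set Distr)
    (hA : A ⊆ Sphere) (hB : B ⊆ Sphere)
    (s t : Distr) (hs : fvD s = ∅) (ht : fvD t = ∅)
    (hsr : Realizes (uarrowT A B) s) (htr : Realizes A t) :
    Realizes B (appD s t) := by
  obtain ⟨f, hfmem, hsf⟩ := hsr
  obtain ⟨⟨⟨hfval, hfcl⟩, hfnorm⟩, x, hflam, hfapp⟩ := hfmem
  obtain ⟨v, hvA, htv⟩ := htr
  obtain ⟨⟨hvval, hvcl⟩, hvnorm⟩ := hA hvA
  have hvdom : domD v ≠ ∅ := dom_ne_of_norm_one hvnorm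
  have hfdom : domD f ≠ ∅ := dom_ne_of_norm_one hfnorm
  have e3 : Eval (appD s t) (appD s v) := evalArg htv s
  have e4 : Eval (appD s v) (appD f v) := evalFun hvval hvdom hsf
  have e5 : TS (appD f v) (bsubst x (stripLam x f) v) := by
    rcases ms x f hflam v hvval with h | ⟨_, h⟩
    · exact h
    · rcases h with h | h
      exacts [absurd h hfdom, absurd h hvdom]
  obtain ⟨w, hwB, hw⟩ := hfapp v hvA
  exact ⟨w, hwB, ((e3.trans e4).trans e5.to_reflTransGen).trans hw⟩

end LinAlg
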